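/- The Outer Normalized Wall Shear Stress τ₂(R) = r₂(R)·(1 - Rⁿ/r₂(R)ⁿ)/√(1 - nR²/(n-2)) is a strictly increasing continuous function of R on (0, √((n-2)/n)), with τ₂(R) → 1 as R → 0⁺ and τ₂(R) → √n as R → √((n-2)/n)⁻. -/

import Mathlib

open Set Filter Topology


private noncomputable def gg (m : ℕ) (q : ℝ) : ℝ := (m:ℝ)+1 + 2*q^(m+3) - ((m:ℝ)+3)*q^2
private noncomputable def hh (m : ℕ) (q : ℝ) : ℝ := ((m:ℝ)+1) * (1-q^(m+3))^2 / gg m q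
private noncomputable def QQ (m : ℕ) (q : ℝ) : ℝ :=
  2 * (∑ k ∈ Finset.range (m+2), ((m:ℝ)+2-k)*q^k) - ((m:ℝ)+3)
private noncomputable def HH (m : ℕ) (q : ℝ) : ℝ :=
  ((m:ℝ)+1) * (∑ k ∈ Finset.range (m+3), q^k)^2 / QQ m q
private noncomputable def ww (m : ℕ) (q : ℝ) : ℝ := ((m:ℝ)+1)*q^2 / ((m:ℝ)+1+2*q^(m+3))

private lemma one_sub_geom (x : ℝ) (p : ℕ) :
    (1-x) * ∑ k ∈ Finset.range p, x^k = 1 - x^p := by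
  have := geom_sum_mul x p
  linear_combination -this

private lemma Saux (q : ℝ) : ∀ (p : ℕ),
    (1-q) * ∑ k ∈ Finset.range p, ((p:ℝ)-k)*q^k
      = ((p:ℝ)+1) - ∑ k ∈ Finset.range (p+1), q^k := by
  intro p
  induction p with
  | zero => simp
  | succ p ih =>
    have hsplit : ∑ k ∈ Finset.range (p+1), (((p:ℝ)+1)-k)*q^k
        = (∑ k ∈ Finset.range p, ((p:ℝ)-k)*q^k) + ∑ k ∈ Finset.range (p+1), q^k := by
      rw [Finset.sum_range_succ, Finset.sum_range_succ (fun k => q^k)]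
      rw [show (∑ k ∈ Finset.range p, ((p:ℝ)-k)*q^k) + (∑ x ∈ Finset.range p, q^x + q^p)
          = (∑ k ∈ Finset.range p, (((p:ℝ)-k)*q^k + q^k)) + q^p from by
        rw [Finset.sum_add_distrib]; ring]
      rw [Finset.sum_congr rfl (fun k _ => by push_cast; ring : ∀ k ∈ Finset.range p,
        ((p:ℝ)+1-k)*q^k = ((p:ℝ)-k)*q^k + q^k)]
      push_cast
      ring
    push_cast
    rw [hsplit]
    have hg : (1-q) * ∑ k ∈ Finset.range (p+1), q^k = 1 - q^(p+1) := one_sub_geom q (p+1)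
    rw [Finset.sum_range_succ (fun k => q^k) (p+1)]
    push_cast at ih ⊢
    linear_combination ih + hg

private lemma QQ_identity (m : ℕ) (q : ℝ) : (1-q)^2 * QQ m q = gg m q := by
  have h1 := Saux q (m+2)
  have h2 := one_sub_geom q (m+3)
  have hco : ∑ k ∈ Finset.range (m+2), (((m+2:ℕ):ℝ)-k)*q^k
      = ∑ k ∈ Finset.range (m+2), ((m:ℝ)+2-k)*q^k := by
    refine Finset.sum_congr rfl (fun k _ => by push_cast; ring)
  rw [hco] at h1
  push_cast at h1
  unfold QQ gg
  linear_combination (2*(1-q))*h1 - 2*h2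
private lemma QQ_ge (m : ℕ) {q : ℝ} (hq : 0 ≤ q) : (m:ℝ)+1 ≤ QQ m q := by
  have h0 : ((m:ℝ)+2-(0:ℕ))*q^(0:ℕ) ≤ ∑ k ∈ Finset.range (m+2), ((m:ℝ)+2-k)*q^k := by
    have hmem : (0:ℕ) ∈ Finset.range (m+2) := Finset.mem_range.2 (by omega)
    refine Finset.single_le_sum (s := Finset.range (m+2)) (f := fun k : ℕ => ((m:ℝ)+2-k)*q^k) (fun k hk => ?_) hmem
    have : (k:ℝ) ≤ (m:ℝ)+1 := by
      have := Finset.mem_range.1 hk; exact_mod_cast Nat.lt_succ_iff.1 this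
    have h2 := pow_nonneg hq k
    show (0:ℝ) ≤ ((m:ℝ)+2-k)*q^k
    nlinarith
  norm_num at h0
  unfold QQ
  linarith

private lemma QQ_pos (m : ℕ) {q : ℝ} (hq : 0 ≤ q) : 0 < QQ m q := by
  have := QQ_ge m hq
  have hm : (0:ℝ) ≤ (m:ℝ) := Nat.cast_nonneg m
  linarith [QQ_ge m hq]

private lemma gg_pos (m : ℕ) {q : ℝ} (hq0 : 0 ≤ q) (hq1 : q < 1) : 0 < gg m q := by
  rw [← QQ_identity]
  have h1 : (0:ℝ) < (1-q)^2 := pow_pos (by linarith) 2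
  exact mul_pos h1 (QQ_pos m hq0)

private lemma A_pos (m : ℕ) {q : ℝ} (hq0 : 0 < q) (hq1 : q < 1) :
    0 < 1 + ((m:ℝ)+2)*q^(m+3) - ((m:ℝ)+2)*q^(m+1) - q^(2*m+4) := by
  set B : ℝ := (∑ k ∈ Finset.range (m+2), q^(2*k)) - ((m:ℝ)+2)*q^(m+1) with hB
  have hfac : 1 + ((m:ℝ)+2)*q^(m+3) - ((m:ℝ)+2)*q^(m+1) - q^(2*m+4) = (1-q^2)*B := by
    have hgeo : (1-q^2) * ∑ k ∈ Finset.range (m+2), (q^2)^k = 1 - (q^2)^(m+2) :=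
      one_sub_geom (q^2) (m+2)
    have hco : ∑ k ∈ Finset.range (m+2), (q^2)^k = ∑ k ∈ Finset.range (m+2), q^(2*k) :=
      Finset.sum_congr rfl (fun k _ => by rw [← pow_mul])
    rw [hco] at hgeo
    have hp : (q^2)^(m+2) = q^(2*m+4) := by rw [show 2*m+4 = 2*(m+2) from by ring, pow_mul]
    rw [hp] at hgeo
    rw [hB]
    linear_combination -hgeo
  rw [hfac]
  have hBpos : 0 < B := by
    have hrefl : ∑ k ∈ Finset.range (m+2), q^(2*(m+1-k)) = ∑ k ∈ Finset.range (m+2), q^(2*k) := by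
      have := Finset.sum_range_reflect (fun j => q^(2*j)) (m+2)
      rw [← this]
      exact Finset.sum_congr rfl (fun k hk => by congr 1 <;> omega)
    have hterm : ∀ k ∈ Finset.range (m+2),
        (q^k - q^(m+1-k))^2 = q^(2*k) + q^(2*(m+1-k)) - 2*q^(m+1) := by
      intro k hk
      have hkr := Finset.mem_range.1 hk
      have hk' : k + (m+1-k) = m+1 := by omega
      have e1 : q^(2*k) = q^k * q^k := by rw [← pow_add]; congr 1; omega
      have e2 : q^(2*(m+1-k)) = q^(m+1-k) * q^(m+1-k) := by rw [← pow_add]; congr 1; omega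
      have e3 : q^(m+1) = q^k * q^(m+1-k) := by rw [← pow_add, hk']
      rw [e1, e2, e3]; ring
    have hsum : ∑ k ∈ Finset.range (m+2), (q^k - q^(m+1-k))^2 = 2*B := by
      rw [Finset.sum_congr rfl hterm]
      have : ∑ k ∈ Finset.range (m+2), (q^(2*k) + q^(2*(m+1-k)) - 2*q^(m+1))
          = (∑ k ∈ Finset.range (m+2), q^(2*k)) + (∑ k ∈ Finset.range (m+2), q^(2*(m+1-k)))
            - (∑ k ∈ Finset.range (m+2), 2*q^(m+1)) := by
        rw [Finset.sum_sub_distrib, Finset.sum_add_distrib]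
      rw [this, hrefl, Finset.sum_const, hB]
      simp only [Finset.card_range, nsmul_eq_mul]
      push_cast; ring
    have h0mem : (0:ℕ) ∈ Finset.range (m+2) := by simp
    have hsingle : (q^(0:ℕ) - q^(m+1-0))^2 ≤ ∑ k ∈ Finset.range (m+2), (q^k - q^(m+1-k))^2 :=
      Finset.single_le_sum (f := fun k => (q^k - q^(m+1-k))^2) (fun k _ => sq_nonneg _) h0mem
    have hlt : q^(m+1) < 1 := pow_lt_one₀ hq0.le hq1 (by omega)
    have : (0:ℝ) < (q^(0:ℕ) - q^(m+1-0))^2 := by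
      simp only [pow_zero, Nat.sub_zero]
      have : 1 - q^(m+1) > 0 := by linarith
      positivity
    nlinarith [hsum, hsingle]
  have h2 : 0 < 1 - q^2 := by nlinarith
  exact mul_pos h2 hBpos
private lemma hh_mono (m : ℕ) : StrictMonoOn (hh m) (Ioo 0 1) := by
  refine strictMonoOn_of_deriv_pos (convex_Ioo 0 1) ?_ ?_
  · unfold hh
    refine ContinuousOn.div (by fun_prop) ?_ ?_
    · unfold gg; fun_prop
    · intro x hx; exact ne_of_gt (gg_pos m hx.1.le hx.2)
  · intro x hx
    rw [interior_Ioo] at hx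
    obtain ⟨hx0, hx1⟩ := hx
    have hgg := gg_pos m hx0.le hx1
    have hp : HasDerivAt (fun q : ℝ => q^(m+3)) (((m:ℝ)+3)*x^(m+2)) x := by
      have := hasDerivAt_pow (m+3) x
      simpa [show m+3-1 = m+2 from by omega] using this
    have hp2 : HasDerivAt (fun q : ℝ => q^2) (2*x) x := by
      simpa using hasDerivAt_pow 2 x
    have hu : HasDerivAt (fun q : ℝ => ((m:ℝ)+1)*(1-q^(m+3))^2)
        (((m:ℝ)+1)*(2*(1-x^(m+3))*(-(((m:ℝ)+3)*x^(m+2))))) x := by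
      have h1 : HasDerivAt (fun q : ℝ => 1-q^(m+3)) (-(((m:ℝ)+3)*x^(m+2))) x := by
        have h := (hasDerivAt_const x (1:ℝ)).sub hp
        rw [zero_sub] at h
        exact h
      have h2 := h1.pow 2
      simpa [mul_comm, mul_assoc, mul_left_comm] using h2.const_mul ((m:ℝ)+1)
    have hv : HasDerivAt (fun q : ℝ => gg m q)
        (2*(((m:ℝ)+3)*x^(m+2)) - ((m:ℝ)+3)*(2*x)) x := by
      unfold gg
      have := (((hasDerivAt_const x ((m:ℝ)+1)).add (hp.const_mul 2)).sub
        (hp2.const_mul ((m:ℝ)+3)))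
      rw [zero_add] at this
      exact this
    have hd : HasDerivAt (hh m)
        (((((m:ℝ)+1)*(2*(1-x^(m+3))*(-(((m:ℝ)+3)*x^(m+2))))) * gg m x
          - (((m:ℝ)+1)*(1-x^(m+3))^2) * (2*(((m:ℝ)+3)*x^(m+2)) - ((m:ℝ)+3)*(2*x)))
          / (gg m x)^2) x := by
      have := hu.div hv (ne_of_gt hgg)
      exact this
    rw [hd.deriv]
    have hA := A_pos m hx0 hx1
    have hx3 : x^(m+3) < 1 := pow_lt_one₀ hx0.le hx1 (by omega)
    have hnum : (((m:ℝ)+1)*(2*(1-x^(m+3))*(-(((m:ℝ)+3)*x^(m+2))))) * gg m x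
          - (((m:ℝ)+1)*(1-x^(m+3))^2) * (2*(((m:ℝ)+3)*x^(m+2)) - ((m:ℝ)+3)*(2*x))
        = 2*((m:ℝ)+1)*((m:ℝ)+3)*x*(1-x^(m+3))
          *(1 + ((m:ℝ)+2)*x^(m+3) - ((m:ℝ)+2)*x^(m+1) - x^(2*m+4)) := by
      unfold gg
      ring
    rw [hnum]
    have hm1 : (0:ℝ) < (m:ℝ)+1 := by positivity
    have hm3 : (0:ℝ) < (m:ℝ)+3 := by positivity
    exact div_pos (mul_pos (mul_pos (mul_pos (mul_pos
      (show (0:ℝ) < 2*((m:ℝ)+1) by linarith) hm3) hx0)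
      (show (0:ℝ) < 1-x^(m+3) by linarith)) hA) (pow_pos hgg 2)

private lemma ww_mono (m : ℕ) : StrictMonoOn (ww m) (Icc 0 1) := by
  refine strictMonoOn_of_deriv_pos (convex_Icc 0 1) ?_ ?_
  · unfold ww
    refine ContinuousOn.div (by fun_prop) (by fun_prop) ?_
    intro x hx
    have h1 := pow_nonneg hx.1 (m+3)
    have h2 : (0:ℝ) ≤ (m:ℝ) := Nat.cast_nonneg m
    nlinarith
  · intro x hx
    rw [interior_Icc] at hx
    obtain ⟨hx0, hx1⟩ := hx
    have hden : (0:ℝ) < (m:ℝ)+1+2*x^(m+3) := by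
      have h1 := pow_nonneg hx0.le (m+3)
      have h2 : (0:ℝ) ≤ (m:ℝ) := Nat.cast_nonneg m
      nlinarith
    have hp : HasDerivAt (fun q : ℝ => q^(m+3)) (((m:ℝ)+3)*x^(m+2)) x := by
      have := hasDerivAt_pow (m+3) x
      simpa [show m+3-1 = m+2 from by omega] using this
    have hp2 : HasDerivAt (fun q : ℝ => q^2) (2*x) x := by
      simpa using hasDerivAt_pow 2 x
    have hu : HasDerivAt (fun q : ℝ => ((m:ℝ)+1)*q^2) (((m:ℝ)+1)*(2*x)) x :=
      hp2.const_mul ((m:ℝ)+1)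
    have hv : HasDerivAt (fun q : ℝ => ((m:ℝ)+1+2*q^(m+3))) (2*(((m:ℝ)+3)*x^(m+2))) x := by
      have := (hasDerivAt_const x ((m:ℝ)+1)).add (hp.const_mul 2)
      rw [zero_add] at this
      exact this
    have hd : HasDerivAt (ww m)
        ((((m:ℝ)+1)*(2*x) * ((m:ℝ)+1+2*x^(m+3))
          - ((m:ℝ)+1)*x^2 * (2*(((m:ℝ)+3)*x^(m+2)))) / ((m:ℝ)+1+2*x^(m+3))^2) x := by
      have := hu.div hv (ne_of_gt hden)
      exact this
    rw [hd.deriv]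
    have hx3 : x^(m+3) < 1 := pow_lt_one₀ hx0.le hx1 (by omega)
    have hnum : ((m:ℝ)+1)*(2*x) * ((m:ℝ)+1+2*x^(m+3))
          - ((m:ℝ)+1)*x^2 * (2*(((m:ℝ)+3)*x^(m+2)))
        = 2*((m:ℝ)+1)^2*x*(1-x^(m+3)) := by
      ring
    rw [hnum]
    have hm1 : (0:ℝ) < (m:ℝ)+1 := by positivity
    exact div_pos (mul_pos (mul_pos (show (0:ℝ) < 2*((m:ℝ)+1)^2 by positivity) hx0)
      (show (0:ℝ) < 1-x^(m+3) by linarith)) (pow_pos hden 2)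
private lemma sum_cast_id (p : ℕ) : ∑ k ∈ Finset.range p, (k:ℝ) = p*((p:ℝ)-1)/2 := by
  induction p with
  | zero => simp
  | succ p ih =>
    rw [Finset.sum_range_succ, ih]
    push_cast
    ring

private lemma QQ_one (m : ℕ) : QQ m 1 = ((m:ℝ)+1)*((m:ℝ)+3) := by
  unfold QQ
  have h1 : ∑ k ∈ Finset.range (m+2), ((m:ℝ)+2-k)*(1:ℝ)^k
      = ∑ k ∈ Finset.range (m+2), (((m:ℝ)+2) - (k:ℝ)) := by
    refine Finset.sum_congr rfl (fun k _ => by rw [one_pow, mul_one])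
  rw [h1, Finset.sum_sub_distrib, Finset.sum_const, Finset.card_range, sum_cast_id]
  push_cast
  ring

private lemma key_facts (m : ℕ) {R s : ℝ} (hR0 : 0 < R) (hRs : R < s)
    (heq : 1 - s^2 - 2*R^(m+3)/(((m:ℝ)+1)*s^(m+1)) = 0) :
    0 < R/s ∧ R/s < 1 ∧ ww m (R/s) = R^2 ∧ Real.sqrt (((m:ℝ)+1)/((m:ℝ)+3)) < s ∧
    s * (1 - R^(m+3)/s^(m+3)) / Real.sqrt (1 - ((m:ℝ)+3)*R^2/((m:ℝ)+1))
      = Real.sqrt (hh m (R/s)) ∧ hh m (R/s) = HH m (R/s) := by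
  have hs0 : 0 < s := lt_trans hR0 hRs
  set q : ℝ := R / s with hq
  have hq0 : 0 < q := div_pos hR0 hs0
  have hq1 : q < 1 := (div_lt_one hs0).2 hRs
  have hRq : R = q * s := (div_mul_cancel₀ R hs0.ne').symm
  have hmp : (0:ℝ) ≤ (m:ℝ) := Nat.cast_nonneg m
  have hsp : s^(m+1) ≠ 0 := pow_ne_zero _ hs0.ne'
  -- the fundamental algebraic relation
  have ha : 2*R^(m+3) = (1-s^2)*(((m:ℝ)+1)*s^(m+1)) := by
    have h1 : 2*R^(m+3)/(((m:ℝ)+1)*s^(m+1)) = 1 - s^2 := by linarith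
    rw [div_eq_iff (by positivity : ((m:ℝ)+1)*s^(m+1) ≠ 0)] at h1
    linarith
  rw [hRq] at ha
  have hcancel : (2*q^(m+3)*s^2) * s^(m+1) = ((1-s^2)*((m:ℝ)+1)) * s^(m+1) := by
    linear_combination ha
  have hs2' := mul_right_cancel₀ hsp hcancel
  have hs2 : s^2*((m:ℝ)+1+2*q^(m+3)) = (m:ℝ)+1 := by linear_combination hs2'
  have hqp := pow_nonneg hq0.le (m+3)
  have hdpos : (0:ℝ) < (m:ℝ)+1+2*q^(m+3) := by nlinarith
  have hwq : ww m q = R^2 := by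
    unfold ww
    rw [div_eq_iff hdpos.ne', hRq]
    linear_combination (-(q^2))*hs2
  refine ⟨hq0, hq1, hwq, ?_, ?_, ?_⟩
  · -- c < s
    have hq3 : q^(m+3) < 1 := pow_lt_one₀ hq0.le hq1 (by omega)
    have hDlt : (m:ℝ)+1+2*q^(m+3) < (m:ℝ)+3 := by nlinarith
    have hseq : s^2 = ((m:ℝ)+1)/((m:ℝ)+1+2*q^(m+3)) := by
      rw [eq_div_iff hdpos.ne']; linear_combination hs2
    have hlt : ((m:ℝ)+1)/((m:ℝ)+3) < s^2 := by
      rw [hseq]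
      exact div_lt_div_of_pos_left (by positivity) hdpos hDlt
    have hcnn := Real.sqrt_nonneg (((m:ℝ)+1)/((m:ℝ)+3))
    have hcsq : Real.sqrt (((m:ℝ)+1)/((m:ℝ)+3))^2 = ((m:ℝ)+1)/((m:ℝ)+3) :=
      Real.sq_sqrt (by positivity)
    nlinarith
  · -- tau formula
    have hq3 : q^(m+3) < 1 := pow_lt_one₀ hq0.le hq1 (by omega)
    have hggp := gg_pos m hq0.le hq1
    have hqpow : R^(m+3)/s^(m+3) = q^(m+3) := by rw [hq, div_pow]
    have hG : 1 - ((m:ℝ)+3)*R^2/((m:ℝ)+1) = gg m q / ((m:ℝ)+1+2*q^(m+3)) := by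
      rw [← hwq]
      unfold ww gg
      field_simp
    have hGpos : 0 < 1 - ((m:ℝ)+3)*R^2/((m:ℝ)+1) := by
      rw [hG]; exact div_pos hggp hdpos
    have hseq : s^2 = ((m:ℝ)+1)/((m:ℝ)+1+2*q^(m+3)) := by
      rw [eq_div_iff hdpos.ne']; linear_combination hs2
    have hτpos : 0 ≤ s * (1 - R^(m+3)/s^(m+3)) / Real.sqrt (1 - ((m:ℝ)+3)*R^2/((m:ℝ)+1)) := by
      rw [hqpow]
      have := Real.sqrt_nonneg (1 - ((m:ℝ)+3)*R^2/((m:ℝ)+1))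
      have h1 : 0 ≤ s * (1 - q^(m+3)) := by nlinarith
      positivity
    rw [← Real.sqrt_sq hτpos]
    congr 1
    rw [div_pow, mul_pow, Real.sq_sqrt hGpos.le, hG, hqpow, hseq]
    unfold hh
    field_simp
  · -- hh = HH
    unfold hh HH
    have h1 := one_sub_geom q (m+3)
    have h2 := QQ_identity m q
    rw [← h2, ← h1, mul_pow]
    have hQp := QQ_pos m hq0.le
    have h1q : (1-q) ≠ 0 := by intro h; rw [sub_eq_zero] at h; exact absurd h.symm (ne_of_lt hq1)
    rw [div_eq_div_iff (mul_ne_zero (pow_ne_zero 2 h1q) hQp.ne') hQp.ne']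
    ring

/-- the Outer Normalized Wall Shear Stress
`τ₂(R) = r₂(R)(1 - Rⁿ/r₂(R)ⁿ)/√(1 - nR²/(n-2))` is strictly increasing and
continuous on `(0, √((n-2)/n))`, with `τ₂ → 1` as `R → 0⁺` and `τ₂ → √n`
as `R → √((n-2)/n)⁻`. -/
theorem outer_NWSS_strict_mono (n : ℕ) (hn : 3 ≤ n) (r₂ : ℝ → ℝ)
    (hr₂ : ∀ R ∈ Ioo (0 : ℝ) (Real.sqrt (((n : ℝ) - 2) / n)),
      R < r₂ R ∧ 1 - (r₂ R) ^ 2 - 2 * R ^ n / (((n : ℝ) - 2) * (r₂ R) ^ (n - 2)) = 0) :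
    StrictMonoOn
      (fun R : ℝ => r₂ R * (1 - R ^ n / (r₂ R) ^ n) / Real.sqrt (1 - n * R ^ 2 / ((n : ℝ) - 2)))
      (Ioo (0 : ℝ) (Real.sqrt (((n : ℝ) - 2) / n))) ∧
    ContinuousOn
      (fun R : ℝ => r₂ R * (1 - R ^ n / (r₂ R) ^ n) / Real.sqrt (1 - n * R ^ 2 / ((n : ℝ) - 2)))
      (Ioo (0 : ℝ) (Real.sqrt (((n : ℝ) - 2) / n))) ∧
    Tendsto
      (fun R : ℝ => r₂ R * (1 - R ^ n / (r₂ R) ^ n) / Real.sqrt (1 - n * R ^ 2 / ((n : ℝ) - 2)))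
      (𝓝[>] 0) (𝓝 1) ∧
    Tendsto
      (fun R : ℝ => r₂ R * (1 - R ^ n / (r₂ R) ^ n) / Real.sqrt (1 - n * R ^ 2 / ((n : ℝ) - 2)))
      (𝓝[<] (Real.sqrt (((n : ℝ) - 2) / n))) (𝓝 (Real.sqrt n)) := by
  obtain ⟨m, rfl⟩ : ∃ m, n = m + 3 := ⟨n - 3, by omega⟩
  have hc3 : ((m+3:ℕ):ℝ) = (m:ℝ)+3 := by push_cast; ring
  simp only [hc3, show (m+3)-2 = m+1 from by omega,
    show (m:ℝ)+3-2 = (m:ℝ)+1 from by ring] at hr₂ ⊢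
  set c : ℝ := Real.sqrt (((m:ℝ)+1)/((m:ℝ)+3)) with hc
  have hcpos : 0 < c := Real.sqrt_pos.2 (by positivity)
  have key := fun R (hR : R ∈ Ioo (0:ℝ) c) => key_facts m hR.1 (hr₂ R hR).1 (hr₂ R hR).2
  have hqmem : ∀ R ∈ Ioo (0:ℝ) c, R / r₂ R ∈ Ioo (0:ℝ) 1 :=
    fun R hR => ⟨(key R hR).1, (key R hR).2.1⟩
  have hqmono : StrictMonoOn (fun R => R / r₂ R) (Ioo 0 c) := by
    intro a ha b hb hab
    refine ((ww_mono m).lt_iff_lt ⟨(key a ha).1.le, (key a ha).2.1.le⟩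
      ⟨(key b hb).1.le, (key b hb).2.1.le⟩).1 ?_
    rw [(key a ha).2.2.1, (key b hb).2.2.1]
    exact pow_lt_pow_left₀ hab ha.1.le two_ne_zero
  have hww_pos : ∀ t : ℝ, 0 < t → 0 < ww m t := by
    intro t ht
    unfold ww
    have h1 := pow_nonneg ht.le (m+3)
    have hm := Nat.cast_nonneg (α := ℝ) m
    have hd : (0:ℝ) < (m:ℝ)+1+2*t^(m+3) := by nlinarith
    exact div_pos (mul_pos (by positivity) (pow_pos ht 2)) hd
  have hw1 : ww m 1 = ((m:ℝ)+1)/((m:ℝ)+3) := by unfold ww; norm_num; ring_nf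
  have hcsq : c^2 = ((m:ℝ)+1)/((m:ℝ)+3) := Real.sq_sqrt (by positivity)
  have hsqrtww : ∀ t : ℝ, 0 < t → t < 1 → Real.sqrt (ww m t) ∈ Ioo (0:ℝ) c := by
    intro t ht0 ht1
    have hwt := hww_pos t ht0
    have hR2 : (Real.sqrt (ww m t))^2 = ww m t := Real.sq_sqrt hwt.le
    have hwlt : ww m t < ww m 1 := (ww_mono m) ⟨ht0.le, ht1.le⟩ ⟨zero_le_one, le_refl 1⟩ ht1
    refine ⟨Real.sqrt_pos.2 hwt, ?_⟩
    nlinarith [Real.sqrt_nonneg (ww m t), hcpos, hw1]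
  have hsurj : ∀ t ∈ Ioo (0:ℝ) 1, ∃ R ∈ Ioo (0:ℝ) c, R / r₂ R = t := by
    intro t ht
    have hRmem := hsqrtww t ht.1 ht.2
    refine ⟨Real.sqrt (ww m t), hRmem, ?_⟩
    refine (ww_mono m).injOn ⟨(key _ hRmem).1.le, (key _ hRmem).2.1.le⟩ ⟨ht.1.le, ht.2.le⟩ ?_
    rw [(key _ hRmem).2.2.1, Real.sq_sqrt (hww_pos t ht.1).le]
  have hqcont : ContinuousOn (fun R => R / r₂ R) (Ioo 0 c) := by
    intro a ha
    refine (StrictMonoOn.continuousAt_of_image_mem_nhds (f := fun R => R / r₂ R) hqmono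
      (isOpen_Ioo.mem_nhds ha) ?_).continuousWithinAt
    refine Filter.mem_of_superset (isOpen_Ioo.mem_nhds (hqmem a ha)) ?_
    intro t ht
    obtain ⟨R, hRmem, hRt⟩ := hsurj t ht
    exact ⟨R, hRmem, hRt⟩
  refine ⟨?_, ?_, ?_, ?_⟩
  · -- strict mono
    intro a ha b hb hab
    have hnn : 0 ≤ hh m (a / r₂ a) := by
      unfold hh
      exact div_nonneg (by positivity) (gg_pos m (key a ha).1.le (key a ha).2.1).le
    show r₂ a * (1 - a^(m+3)/(r₂ a)^(m+3)) / Real.sqrt (1 - ((m:ℝ)+3)*a^2/((m:ℝ)+1))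
      < r₂ b * (1 - b^(m+3)/(r₂ b)^(m+3)) / Real.sqrt (1 - ((m:ℝ)+3)*b^2/((m:ℝ)+1))
    rw [(key a ha).2.2.2.2.1, (key b hb).2.2.2.2.1]
    exact Real.sqrt_lt_sqrt hnn (hh_mono m (hqmem a ha) (hqmem b hb) (hqmono ha hb hab))
  · -- continuous
    have hHHcont : ContinuousOn (fun x => Real.sqrt (HH m x)) (Ioo 0 1) := by
      apply Real.continuous_sqrt.comp_continuousOn
      unfold HH
      refine ContinuousOn.div ?_ ?_ ?_
      · exact (continuous_const.mul
          ((continuous_finset_sum _ (fun k _ => continuous_pow k)).pow 2)).continuousOn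
      · unfold QQ
        exact ((continuous_const.mul (continuous_finset_sum _
          (fun k _ => continuous_const.mul (continuous_pow k)))).sub continuous_const).continuousOn
      · intro x hx; exact (QQ_pos m hx.1.le).ne'
    refine ContinuousOn.congr (hHHcont.comp hqcont (fun R hR => hqmem R hR)) ?_
    intro R hR
    show r₂ R * (1 - R^(m+3)/(r₂ R)^(m+3)) / Real.sqrt (1 - ((m:ℝ)+3)*R^2/((m:ℝ)+1))
      = Real.sqrt (HH m (R / r₂ R))
    rw [(key R hR).2.2.2.2.1, (key R hR).2.2.2.2.2]
  · -- limit at 0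
    have hIoo0 : Ioo (0:ℝ) c ∈ 𝓝[>] (0:ℝ) := Ioo_mem_nhdsGT_of_mem ⟨le_refl 0, hcpos⟩
    have hqt : Tendsto (fun R => R / r₂ R) (𝓝[>] (0:ℝ)) (𝓝 0) := by
      refine tendsto_of_tendsto_of_tendsto_of_le_of_le' (g := fun _ => (0:ℝ))
        (h := fun R => R / c) tendsto_const_nhds ?_ ?_ ?_
      · have h1 : Tendsto (fun R : ℝ => R / c) (𝓝 0) (𝓝 (0 / c)) :=
          (continuous_id.div_const c).tendsto 0
        rw [zero_div] at h1
        exact h1.mono_left nhdsWithin_le_nhds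
      · filter_upwards [hIoo0] with R hR using (key R hR).1.le
      · filter_upwards [hIoo0] with R hR
        exact div_le_div_of_nonneg_left hR.1.le hcpos (key R hR).2.2.2.1.le
    have hggne : gg m 0 ≠ 0 := by
      unfold gg
      norm_num
      exact ne_of_gt (by positivity)
    have hcont : ContinuousAt (fun x => Real.sqrt (hh m x)) 0 := by
      apply Real.continuous_sqrt.continuousAt.comp
      unfold hh
      refine ContinuousAt.div (by fun_prop) ?_ hggne
      unfold gg; fun_prop
    have h0 : hh m 0 = 1 := by
      unfold hh gg
      norm_num
      exact (by positivity : ((m:ℝ)+1) ≠ 0)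
    have hT := hcont.tendsto.comp hqt
    rw [show Real.sqrt (hh m 0) = 1 from by rw [h0, Real.sqrt_one]] at hT
    refine Tendsto.congr' ?_ hT
    filter_upwards [hIoo0] with R hR
    exact ((key R hR).2.2.2.2.1).symm
  · -- limit at c
    have hIooc : Ioo (0:ℝ) c ∈ 𝓝[<] c := Ioo_mem_nhdsLT_of_mem ⟨hcpos, le_refl c⟩
    have hqt : Tendsto (fun R => R / r₂ R) (𝓝[<] c) (𝓝 1) := by
      rw [tendsto_order]
      constructor
      · intro b hb
        rcases le_or_gt b 0 with hb0 | hb0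
        · filter_upwards [hIooc] with R hR
          exact lt_of_le_of_lt hb0 (key R hR).1
        · have hRbmem := hsqrtww b hb0 hb
          filter_upwards [hIooc,
            Ioo_mem_nhdsLT_of_mem (show c ∈ Ioc (Real.sqrt (ww m b)) c from ⟨hRbmem.2, le_refl c⟩)]
            with R hR hR2
          have h1 : ww m b < ww m (R / r₂ R) := by
            rw [(key R hR).2.2.1, ← Real.sq_sqrt (hww_pos b hb0).le]
            exact pow_lt_pow_left₀ hR2.1 (Real.sqrt_nonneg _) two_ne_zero
          exact ((ww_mono m).lt_iff_lt ⟨hb0.le, hb.le⟩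
            ⟨(key R hR).1.le, (key R hR).2.1.le⟩).1 h1
      · intro b hb
        filter_upwards [hIooc] with R hR
        exact lt_trans (key R hR).2.1 hb
    have hcont : ContinuousAt (fun x => Real.sqrt (HH m x)) 1 := by
      apply Real.continuous_sqrt.continuousAt.comp
      unfold HH
      refine ContinuousAt.div ?_ ?_ (QQ_pos m zero_le_one).ne'
      · fun_prop
      · unfold QQ; fun_prop
    have hH1 : HH m 1 = (m:ℝ)+3 := by
      unfold HH
      rw [QQ_one]
      have hsum1 : ∑ k ∈ Finset.range (m+3), (1:ℝ)^k = (m:ℝ)+3 := by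
        simp only [one_pow, Finset.sum_const, Finset.card_range, nsmul_eq_mul, mul_one]
        push_cast
        ring
      rw [hsum1]
      field_simp
    have hT := hcont.tendsto.comp hqt
    rw [show Real.sqrt (HH m 1) = Real.sqrt ((m:ℝ)+3) from by rw [hH1]] at hT
    refine Tendsto.congr' ?_ hT
    filter_upwards [hIooc] with R hR
    show Real.sqrt (HH m (R / r₂ R))
      = r₂ R * (1 - R^(m+3)/(r₂ R)^(m+3)) / Real.sqrt (1 - ((m:ℝ)+3)*R^2/((m:ℝ)+1))
    rw [(key R hR).2.2.2.2.1, (key R hR).2.2.2.2.2]
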